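/- Let h > 0, ω ≥ 1, and let K ⊆ ℝ² be a convex Lebesgue-measurable set of finite positive measure with diameter at most h, and r₀ ∈ K. Let φ : ℝ² → ℝ be twice continuously differentiable with the operator norm of its Hessian bounded by M on K, and suppose ξ₀ := |∇φ(r₀)|² > 0 and ∇φ(r₀) = √ξ₀ (cos θ, sin θ) for some θ ∈ ℝ. Let A₀ : ℝ² → ℂ be Lipschitz with constant L on K and satisfy |A₀(r)| ≤ L₀ on K; let γ = (1/|K|)∫_K A₀. Let C₀, C₁ ≥ 0, let θ_h ∈ ℝ satisfy |θ_h − θ| ≤ C₁/ω, and let R : ℝ² → ℂ satisfy |R(r)| ≤ C₀/ω on K. Define u(r) = A₀(r)·exp(i ω φ(r)) + R(r), τ_h(r) = √ξ₀ (cos θ_h, sin θ_h)·(r − r₀), and π_h u(r) = γ·exp(i ω φ(r₀))·exp(i ω τ_h(r)). Then ( ∫_K |u(r) − π_h u(r)|² dr )^{1/2} ≤ |K|^{1/2} · [ (L + L₀ √ξ₀ C₁) h + (M L₀ / 2) ω h² + C₀/ω ]. In particular the L²(K)-interpolation error is bounded by C·(ω^{−1} + h + ω h²) with C depending only on L, L₀,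 M, √ξ₀, C₀, C₁ and |K|. -/

import Mathlib

open MeasureTheory

noncomputable section

private lemma lipexp (a b : ℝ) :
    ‖Complex.exp (Complex.I * a) - Complex.exp (Complex.I * b)‖ ≤ |a - b| := by
  have hd : ∀ t ∈ (Set.univ : Set ℝ), HasDerivWithinAt (fun s : ℝ => Complex.exp (Complex.I * s))
      (Complex.I * Complex.exp (Complex.I * t)) Set.univ t := by
    intro t _
    have h1 : HasDerivAt (fun s : ℝ => (s : ℂ)) 1 t := by
      simpa using (hasDerivAt_id t).ofReal_comp
    have h2 := (h1.const_mul Complex.I).cexp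
    have h3 : HasDerivAt (fun s : ℝ => Complex.exp (Complex.I * s))
        (Complex.I * Complex.exp (Complex.I * t)) t := by
      convert h2 using 1; ring
    exact h3.hasDerivWithinAt
  have := convex_univ.norm_image_sub_le_of_norm_hasDerivWithin_le hd
    (C := 1) (fun t _ => by simp [Complex.norm_exp]) (Set.mem_univ b) (Set.mem_univ a)
  simpa [Real.norm_eq_abs] using this

private lemma curve_lip (a b : ℝ) :
    (Real.cos a - Real.cos b) ^ 2 + (Real.sin a - Real.sin b) ^ 2 ≤ (a - b) ^ 2 := by
  have h2 : Complex.exp (Complex.I * a) - Complex.exp (Complex.I * b) =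
      Complex.ofReal (Real.cos a - Real.cos b) +
        Complex.ofReal (Real.sin a - Real.sin b) * Complex.I := by
    rw [mul_comm Complex.I, mul_comm Complex.I, Complex.exp_mul_I, Complex.exp_mul_I]
    push_cast
    ring
  have h3 : (Real.cos a - Real.cos b) ^ 2 + (Real.sin a - Real.sin b) ^ 2 =
      ‖Complex.exp (Complex.I * a) - Complex.exp (Complex.I * b)‖ ^ 2 := by
    rw [h2, Complex.sq_norm, Complex.normSq_add_mul_I]
  rw [h3]
  calc ‖Complex.exp (Complex.I * a) - Complex.exp (Complex.I * b)‖ ^ 2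
      ≤ |a - b| ^ 2 := pow_le_pow_left₀ (norm_nonneg _) (lipexp a b) 2
    _ = (a - b) ^ 2 := sq_abs _

private lemma abs_inner_two_le (c s x y t n : ℝ) (hcs : c ^ 2 + s ^ 2 ≤ t ^ 2)
    (hxy : x ^ 2 + y ^ 2 ≤ n ^ 2) (ht : 0 ≤ t) (hn : 0 ≤ n) :
    |c * x + s * y| ≤ t * n := by
  have h1 : (c * x + s * y) ^ 2 ≤ (t * n) ^ 2 := by
    nlinarith [sq_nonneg (c * y - s * x),
      mul_le_mul hcs hxy (by positivity) (by positivity)]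
  nlinarith [abs_nonneg (c * x + s * y), sq_abs (c * x + s * y), mul_nonneg ht hn]

private lemma taylor2 {E : Type*} [NormedAddCommGroup E] [NormedSpace ℝ E]
    {K : Set E} (hKconv : Convex ℝ K)
    {φ : E → ℝ} (hφ : ContDiff ℝ 2 φ)
    {M : ℝ} (hM : ∀ x ∈ K, ‖fderiv ℝ (fderiv ℝ φ) x‖ ≤ M)
    {r₀ : E} (hr₀ : r₀ ∈ K) {r : E} (hr : r ∈ K) :
    |φ r - φ r₀ - fderiv ℝ φ r₀ (r - r₀)| ≤ M / 2 * ‖r - r₀‖ ^ 2 := by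
  set v := r - r₀ with hv
  have hφd : Differentiable ℝ φ := hφ.differentiable (by norm_num)
  have hφ' : ContDiff ℝ 1 (fderiv ℝ φ) := hφ.fderiv_right (by norm_num)
  have hder : ∀ x ∈ K, ‖fderiv ℝ φ x - fderiv ℝ φ r₀‖ ≤ M * ‖x - r₀‖ := by
    intro x hx
    exact hKconv.norm_image_sub_le_of_norm_fderiv_le
      (fun y _ => (hφ'.differentiable (by norm_num)).differentiableAt) hM hr₀ hx
  set c : ℝ → E := fun t => r₀ + t • v with hc
  have hcK : ∀ t ∈ Set.Icc (0:ℝ) 1, c t ∈ K := by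
    intro t ht
    have : (1 - t) • r₀ + t • r ∈ K := hKconv hr₀ hr (by linarith [ht.2]) ht.1 (by ring)
    convert this using 1
    simp only [hc, hv, smul_sub]
    module
  set g' : ℝ → ℝ := fun t => fderiv ℝ φ (c t) v - fderiv ℝ φ r₀ v with hg'
  have hg : ∀ t : ℝ, HasDerivAt (fun t => φ (c t) - t * fderiv ℝ φ r₀ v) (g' t) t := by
    intro t
    have hcd : HasDerivAt c v t := by
      rw [hc]; simpa using ((hasDerivAt_id t).smul_const v).const_add r₀
    have h1 : HasDerivAt (fun t => φ (c t)) (fderiv ℝ φ (c t) v) t :=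
      (hφd (c t)).hasFDerivAt.comp_hasDerivAt t hcd
    exact h1.sub (hasDerivAt_mul_const (fderiv ℝ φ r₀ v))
  have hcont : Continuous g' := by
    have h1 : Continuous fun t : ℝ => fderiv ℝ φ (c t) :=
      (hφ'.continuous).comp (by continuity)
    exact (h1.clm_apply continuous_const).sub continuous_const
  have heq : φ r - φ r₀ - fderiv ℝ φ r₀ v = ∫ t in (0:ℝ)..1, g' t := by
    rw [intervalIntegral.integral_eq_sub_of_hasDerivAt (fun t _ => hg t)
      (hcont.intervalIntegrable 0 1)]
    have hc1 : c 1 = r := by simp [hc, hv]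
    have hc0 : c 0 = r₀ := by simp [hc]
    rw [hc1, hc0]
    ring
  have hbound : ∀ t ∈ Set.Ioc (0:ℝ) 1, ‖g' t‖ ≤ (M * ‖v‖ ^ 2) * t := by
    intro t ht
    have htK : c t ∈ K := hcK t ⟨ht.1.le, ht.2⟩
    have h1 : ‖g' t‖ ≤ ‖fderiv ℝ φ (c t) - fderiv ℝ φ r₀‖ * ‖v‖ := by
      simpa [hg'] using (fderiv ℝ φ (c t) - fderiv ℝ φ r₀).le_opNorm v
    have h2 : ‖fderiv ℝ φ (c t) - fderiv ℝ φ r₀‖ ≤ M * (t * ‖v‖) := by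
      have := hder (c t) htK
      simpa [hc, norm_smul, abs_of_pos ht.1] using this
    calc ‖g' t‖ ≤ M * (t * ‖v‖) * ‖v‖ :=
          h1.trans (mul_le_mul_of_nonneg_right h2 (norm_nonneg _))
      _ = (M * ‖v‖ ^ 2) * t := by ring
  have hM0 : 0 ≤ M := le_trans (norm_nonneg (fderiv ℝ (fderiv ℝ φ) r₀)) (hM r₀ hr₀)
  have hint : ‖∫ t in (0:ℝ)..1, g' t‖ ≤ |∫ t in (0:ℝ)..1, (M * ‖v‖ ^ 2) * t| := by
    refine (intervalIntegral.norm_integral_le_of_norm_le zero_le_one ?_ ?_).trans (le_abs_self _)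
    · exact ae_of_all _ hbound
    · exact (continuous_const.mul continuous_id).intervalIntegrable 0 1
  have hval : (∫ t in (0:ℝ)..1, (M * ‖v‖ ^ 2) * t) = M / 2 * ‖v‖ ^ 2 := by
    rw [intervalIntegral.integral_const_mul]
    simp [integral_id]
    ring
  rw [heq] at *
  calc |∫ t in (0:ℝ)..1, g' t| = ‖∫ t in (0:ℝ)..1, g' t‖ := (Real.norm_eq_abs _).symm
    _ ≤ M / 2 * ‖v‖ ^ 2 := by
        refine hint.trans (le_of_eq ?_)
        rw [hval, abs_of_nonneg (by positivity)]

set_option maxHeartbeats 1000000 in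
/-- Single-wave best-approximation bound for the adaptive plane wave space:
if `u = A₀·exp(iωφ) + R` on an element `K` of diameter at most `h` (barycenter `r₀`),
`∇φ(r₀) = √ξ₀(cos θ, sin θ)` with `ξ₀ = |∇φ(r₀)|² > 0`, the Hessian of `φ` is bounded
by `M` on `K`, `A₀` is Lipschitz with constant `L` and bounded by `L₀` on `K`,
`|θ_h − θ| ≤ C₁/ω`, `|R| ≤ C₀/ω` on `K`, and
`π_h u(r) = γ·exp(iωφ(r₀))·exp(iωτ_h(r))` with `γ` the integral average of `A₀` on `K`
and `τ_h(r) = √ξ₀(cos θ_h, sin θ_h)·(r − r₀)`, then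
`‖u − π_h u‖_{L²(K)} ≤ |K|^{1/2}·[(L + L₀√ξ₀C₁)h + (ML₀/2)ωh² + C₀/ω]`. -/
theorem adaptive_plane_wave_L2_interpolation_error
    (h ω : ℝ) (hh : 0 < h) (hω : 1 ≤ ω)
    (K : Set (EuclideanSpace ℝ (Fin 2))) (hKmeas : MeasurableSet K) (hKconv : Convex ℝ K)
    (hKpos : 0 < volume K) (hKfin : volume K < ⊤)
    (hdiam : EMetric.diam K ≤ ENNReal.ofReal h)
    (r₀ : EuclideanSpace ℝ (Fin 2)) (hr₀ : r₀ ∈ K)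
    (φ : EuclideanSpace ℝ (Fin 2) → ℝ) (hφ : ContDiff ℝ 2 φ)
    (M : ℝ) (hM : ∀ x ∈ K, ‖fderiv ℝ (fderiv ℝ φ) x‖ ≤ M)
    (ξ₀ θ : ℝ) (hξ₀ : ξ₀ = ‖gradient φ r₀‖ ^ 2) (hξ₀pos : 0 < ξ₀)
    (hθ₀ : gradient φ r₀ 0 = Real.sqrt ξ₀ * Real.cos θ)
    (hθ₁ : gradient φ r₀ 1 = Real.sqrt ξ₀ * Real.sin θ)
    (A₀ : EuclideanSpace ℝ (Fin 2) → ℂ) (L L₀ : ℝ)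
    (hA₀lip : ∀ r ∈ K, ∀ r' ∈ K, ‖A₀ r - A₀ r'‖ ≤ L * ‖r - r'‖)
    (hA₀bd : ∀ r ∈ K, ‖A₀ r‖ ≤ L₀)
    (γ : ℂ) (hγ : γ = ((volume K).toReal)⁻¹ • ∫ r in K, A₀ r)
    (C₀ C₁ : ℝ) (hC₀ : 0 ≤ C₀) (hC₁ : 0 ≤ C₁)
    (θh : ℝ) (hθh : |θh - θ| ≤ C₁ / ω)
    (R : EuclideanSpace ℝ (Fin 2) → ℂ) (hR : ∀ r ∈ K, ‖R r‖ ≤ C₀ / ω)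
    (u πu : EuclideanSpace ℝ (Fin 2) → ℂ) (τ : EuclideanSpace ℝ (Fin 2) → ℝ)
    (hu : ∀ r, u r = A₀ r * Complex.exp (Complex.I * ω * φ r) + R r)
    (hτ : ∀ r, τ r = Real.sqrt ξ₀ *
      (Real.cos θh * (r 0 - r₀ 0) + Real.sin θh * (r 1 - r₀ 1)))
    (hπ : ∀ r, πu r = γ * Complex.exp (Complex.I * ω * φ r₀) *
      Complex.exp (Complex.I * ω * τ r)) :
    Real.sqrt (∫ r in K, ‖u r - πu r‖ ^ 2) ≤
      Real.sqrt (volume K).toReal *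
        ((L + L₀ * Real.sqrt ξ₀ * C₁) * h + (M * L₀ / 2) * ω * h ^ 2 + C₀ / ω) := by
  have hωpos : (0:ℝ) < ω := lt_of_lt_of_le one_pos hω
  set ν : ℝ := (volume K).toReal with hνdef
  have hνpos : 0 < ν := ENNReal.toReal_pos hKpos.ne' hKfin.ne
  have hL₀ : 0 ≤ L₀ := le_trans (norm_nonneg _) (hA₀bd r₀ hr₀)
  have hM0 : 0 ≤ M := le_trans (norm_nonneg (fderiv ℝ (fderiv ℝ φ) r₀)) (hM r₀ hr₀)
  have hsξ : 0 ≤ Real.sqrt ξ₀ := Real.sqrt_nonneg _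
  have hdist : ∀ r ∈ K, ∀ r' ∈ K, ‖r - r'‖ ≤ h := by
    intro r hr r' hr'
    rw [← dist_eq_norm]
    exact (edist_le_ofReal hh.le).mp ((EMetric.edist_le_diam_of_mem hr hr').trans hdiam)
  have hL : 0 ≤ L := by
    by_contra hc
    push_neg at hc
    obtain ⟨r, hrK, hrne⟩ : ∃ r ∈ K, r ≠ r₀ := by
      by_contra hc2
      push_neg at hc2
      have hsub : K ⊆ {r₀} := fun x hx => hc2 x hx
      have h0 : volume K = 0 :=
        le_antisymm (by simpa [measure_singleton] using measure_mono (μ := volume) hsub) zero_le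
      exact hKpos.ne' h0
    have h1 := hA₀lip r hrK r₀ hr₀
    have h2 : 0 < ‖r - r₀‖ := by rwa [norm_pos_iff, sub_ne_zero]
    nlinarith [norm_nonneg (A₀ r - A₀ r₀)]
  -- integrability of A₀ on K
  have hA₀cont : ContinuousOn A₀ K := by
    have hlip : LipschitzOnWith (Real.toNNReal L) A₀ K := by
      rw [lipschitzOnWith_iff_dist_le_mul]
      intro x hx y hy
      rw [dist_eq_norm, dist_eq_norm]
      calc ‖A₀ x - A₀ y‖ ≤ L * ‖x - y‖ := hA₀lip x hx y hy
        _ ≤ Real.toNNReal L * ‖x - y‖ :=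
            mul_le_mul_of_nonneg_right (Real.le_coe_toNNReal L) (norm_nonneg _)
    exact hlip.continuousOn
  have hA₀meas : AEStronglyMeasurable A₀ (volume.restrict K) :=
    hA₀cont.aestronglyMeasurable hKmeas
  have hA₀int : IntegrableOn A₀ K := by
    refine Integrable.mono' (g := fun _ => L₀) (integrableOn_const hKfin.ne)
      hA₀meas ?_
    exact ae_restrict_of_forall_mem hKmeas hA₀bd
  have hνinv : ‖(ν⁻¹ : ℝ)‖ = ν⁻¹ := by
    rw [Real.norm_eq_abs, abs_of_nonneg (inv_nonneg.2 hνpos.le)]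
  have hγbd : ‖γ‖ ≤ L₀ := by
    rw [hγ, norm_smul, hνinv]
    have h1 : ‖∫ r in K, A₀ r‖ ≤ L₀ * ν :=
      norm_setIntegral_le_of_norm_le_const hKfin hA₀bd
    calc ν⁻¹ * ‖∫ r in K, A₀ r‖ ≤ ν⁻¹ * (L₀ * ν) :=
          mul_le_mul_of_nonneg_left h1 (inv_nonneg.2 hνpos.le)
      _ = L₀ := by field_simp
  have hγclose : ∀ r ∈ K, ‖A₀ r - γ‖ ≤ L * h := by
    intro r hr
    have hsub : (ν⁻¹ : ℝ) • ∫ r' in K, (A₀ r - A₀ r') = A₀ r - γ := by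
      rw [integral_sub (integrableOn_const (C := A₀ r) hKfin.ne) hA₀int, setIntegral_const, measureReal_def, ← hνdef,
        smul_sub, smul_smul, inv_mul_cancel₀ hνpos.ne', one_smul, hγ]
    rw [← hsub, norm_smul, hνinv]
    have h1 : ‖∫ r' in K, (A₀ r - A₀ r')‖ ≤ (L * h) * ν := by
      apply norm_setIntegral_le_of_norm_le_const hKfin
      · intro r' hr'
        calc ‖A₀ r - A₀ r'‖ ≤ L * ‖r - r'‖ := hA₀lip r hr r' hr'
          _ ≤ L * h := mul_le_mul_of_nonneg_left (hdist r hr r' hr') hL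
    calc ν⁻¹ * ‖∫ r' in K, (A₀ r - A₀ r')‖ ≤ ν⁻¹ * ((L * h) * ν) :=
          mul_le_mul_of_nonneg_left h1 (inv_nonneg.2 hνpos.le)
      _ = L * h := by field_simp
  -- the gradient as a directional derivative
  have hgradapp : ∀ v : EuclideanSpace ℝ (Fin 2),
      fderiv ℝ φ r₀ v = Real.sqrt ξ₀ * Real.cos θ * v 0 + Real.sqrt ξ₀ * Real.sin θ * v 1 := by
    intro v
    have h1 : (inner ℝ (gradient φ r₀) v : ℝ) = fderiv ℝ φ r₀ v :=
      InnerProductSpace.toDual_symm_apply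
    rw [← h1]
    rw [PiLp.inner_apply, Fin.sum_univ_two]
    simp only [RCLike.inner_apply, conj_trivial, hθ₀, hθ₁]
    ring
  have hsq : ∀ r : EuclideanSpace ℝ (Fin 2),
      ‖r - r₀‖ ^ 2 = (r 0 - r₀ 0) ^ 2 + (r 1 - r₀ 1) ^ 2 := by
    intro r
    rw [EuclideanSpace.norm_eq, Real.sq_sqrt (by positivity)]
    simp [Fin.sum_univ_two, Real.norm_eq_abs, sq_abs]
  -- phase error estimate
  have hphase : ∀ r ∈ K, |φ r - φ r₀ - τ r| ≤
      Real.sqrt ξ₀ * (C₁ / ω) * h + M / 2 * h ^ 2 := by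
    intro r hr
    have ht := taylor2 hKconv hφ hM hr₀ hr
    have hΔ : ‖r - r₀‖ ≤ h := hdist r hr r₀ hr₀
    have hD : fderiv ℝ φ r₀ (r - r₀) =
        Real.sqrt ξ₀ * Real.cos θ * (r 0 - r₀ 0) + Real.sqrt ξ₀ * Real.sin θ * (r 1 - r₀ 1) := by
      rw [hgradapp]
      simp
    have hθθh : |θ - θh| ≤ C₁ / ω := by rwa [abs_sub_comm]
    have habs : |(Real.cos θ - Real.cos θh) * (r 0 - r₀ 0) +
        (Real.sin θ - Real.sin θh) * (r 1 - r₀ 1)| ≤ |θ - θh| * ‖r - r₀‖ := by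
      refine abs_inner_two_le _ _ _ _ _ _ ?_ (le_of_eq (hsq r).symm) (abs_nonneg _)
        (norm_nonneg _)
      calc (Real.cos θ - Real.cos θh) ^ 2 + (Real.sin θ - Real.sin θh) ^ 2
          ≤ (θ - θh) ^ 2 := curve_lip θ θh
        _ = |θ - θh| ^ 2 := (sq_abs _).symm
    have habs' : |(Real.cos θ - Real.cos θh) * (r 0 - r₀ 0) +
        (Real.sin θ - Real.sin θh) * (r 1 - r₀ 1)| ≤ (C₁ / ω) * h :=
      habs.trans (mul_le_mul hθθh hΔ (norm_nonneg _) (by positivity))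
    have key : φ r - φ r₀ - τ r =
        (φ r - φ r₀ - fderiv ℝ φ r₀ (r - r₀)) +
          Real.sqrt ξ₀ * ((Real.cos θ - Real.cos θh) * (r 0 - r₀ 0) +
            (Real.sin θ - Real.sin θh) * (r 1 - r₀ 1)) := by
      rw [hD, hτ r]
      ring
    have hsqle : ‖r - r₀‖ ^ 2 ≤ h ^ 2 := by
      have := pow_le_pow_left₀ (norm_nonneg _) hΔ 2
      simpa using this
    calc |φ r - φ r₀ - τ r| ≤ |φ r - φ r₀ - fderiv ℝ φ r₀ (r - r₀)| +
          |Real.sqrt ξ₀ * ((Real.cos θ - Real.cos θh) * (r 0 - r₀ 0) +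
            (Real.sin θ - Real.sin θh) * (r 1 - r₀ 1))| := by
          rw [key]; exact abs_add_le _ _
      _ = |φ r - φ r₀ - fderiv ℝ φ r₀ (r - r₀)| +
          Real.sqrt ξ₀ * |(Real.cos θ - Real.cos θh) * (r 0 - r₀ 0) +
            (Real.sin θ - Real.sin θh) * (r 1 - r₀ 1)| := by
          rw [abs_mul, abs_of_nonneg hsξ]
      _ ≤ M / 2 * h ^ 2 + Real.sqrt ξ₀ * ((C₁ / ω) * h) := by
          gcongr
          exact ht.trans (by nlinarith)
      _ = Real.sqrt ξ₀ * (C₁ / ω) * h + M / 2 * h ^ 2 := by ring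
  -- pointwise bound
  set B : ℝ := (L + L₀ * Real.sqrt ξ₀ * C₁) * h + (M * L₀ / 2) * ω * h ^ 2 + C₀ / ω with hB
  have hpt : ∀ r ∈ K, ‖u r - πu r‖ ≤ B := by
    intro r hr
    rw [hu r, hπ r]
    set a : ℝ := ω * φ r with ha
    set b : ℝ := ω * (φ r₀ + τ r) with hb
    have ea : Complex.I * (ω:ℂ) * (φ r : ℂ) = Complex.I * (a : ℂ) := by
      rw [ha]; push_cast; ring
    have e2 : Complex.exp (Complex.I * (ω:ℂ) * (φ r₀ : ℂ)) *
        Complex.exp (Complex.I * (ω:ℂ) * (τ r : ℂ)) = Complex.exp (Complex.I * (b : ℂ)) := by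
      rw [← Complex.exp_add]
      congr 1
      rw [hb]; push_cast; ring
    have split : A₀ r * Complex.exp (Complex.I * (ω:ℂ) * (φ r : ℂ)) + R r -
        γ * Complex.exp (Complex.I * (ω:ℂ) * (φ r₀ : ℂ)) *
          Complex.exp (Complex.I * (ω:ℂ) * (τ r : ℂ)) =
        (A₀ r - γ) * Complex.exp (Complex.I * (a:ℂ)) +
          γ * (Complex.exp (Complex.I * (a:ℂ)) - Complex.exp (Complex.I * (b:ℂ))) + R r := by
      rw [mul_assoc γ, e2, ea]
      ring
    rw [split]
    have hexpnorm : ‖Complex.exp (Complex.I * (a:ℂ))‖ = 1 := by simp [Complex.norm_exp]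
    have h1 : ‖(A₀ r - γ) * Complex.exp (Complex.I * (a:ℂ))‖ ≤ L * h := by
      rw [norm_mul, hexpnorm, mul_one]
      exact hγclose r hr
    have h2 : ‖γ * (Complex.exp (Complex.I * (a:ℂ)) - Complex.exp (Complex.I * (b:ℂ)))‖ ≤
        L₀ * (Real.sqrt ξ₀ * C₁ * h + M / 2 * ω * h ^ 2) := by
      rw [norm_mul]
      have hab : |a - b| ≤ Real.sqrt ξ₀ * C₁ * h + M / 2 * ω * h ^ 2 := by
        have heq : a - b = ω * (φ r - φ r₀ - τ r) := by rw [ha, hb]; ring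
        rw [heq, abs_mul, abs_of_pos hωpos]
        calc ω * |φ r - φ r₀ - τ r| ≤
            ω * (Real.sqrt ξ₀ * (C₁ / ω) * h + M / 2 * h ^ 2) :=
              mul_le_mul_of_nonneg_left (hphase r hr) hωpos.le
          _ = Real.sqrt ξ₀ * C₁ * h + M / 2 * ω * h ^ 2 := by
              field_simp
      exact mul_le_mul hγbd ((lipexp a b).trans hab) (norm_nonneg _) hL₀
    have h3 : ‖R r‖ ≤ C₀ / ω := hR r hr
    calc ‖(A₀ r - γ) * Complex.exp (Complex.I * (a:ℂ)) +
          γ * (Complex.exp (Complex.I * (a:ℂ)) - Complex.exp (Complex.I * (b:ℂ))) + R r‖ ≤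
        ‖(A₀ r - γ) * Complex.exp (Complex.I * (a:ℂ))‖ +
          ‖γ * (Complex.exp (Complex.I * (a:ℂ)) - Complex.exp (Complex.I * (b:ℂ)))‖ +
          ‖R r‖ := norm_add₃_le
      _ ≤ L * h + L₀ * (Real.sqrt ξ₀ * C₁ * h + M / 2 * ω * h ^ 2) + C₀ / ω := by
          gcongr
      _ = B := by rw [hB]; ring
  obtain ⟨x₀, hx₀⟩ := nonempty_of_measure_ne_zero hKpos.ne'
  have hB0 : 0 ≤ B := le_trans (norm_nonneg _) (hpt x₀ hx₀)
  have hint : (∫ r in K, ‖u r - πu r‖ ^ 2) ≤ ν * B ^ 2 := by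
    have h1 : (∫ r in K, ‖u r - πu r‖ ^ 2) ≤ ∫ _r in K, B ^ 2 := by
      apply integral_mono_of_nonneg
      · exact ae_of_all _ fun r => sq_nonneg _
      · exact integrableOn_const hKfin.ne
      · refine ae_restrict_of_forall_mem hKmeas fun r hr => ?_
        simpa using pow_le_pow_left₀ (norm_nonneg (u r - πu r)) (hpt r hr) 2
    exact (by simpa [setIntegral_const, smul_eq_mul] using h1 : _ ≤ volume.real K * B ^ 2)
  calc Real.sqrt (∫ r in K, ‖u r - πu r‖ ^ 2) ≤ Real.sqrt (ν * B ^ 2) :=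
        Real.sqrt_le_sqrt hint
    _ = Real.sqrt ν * B := by
        rw [Real.sqrt_mul hνpos.le, Real.sqrt_sq hB0]
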